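/- Let (Ω, P) be a probability space, N ≥ 2, u† : Fin N → ℝ with Σᵢ u†(i) = 0, and σ ≥ 0. For each ordered pair (a,b) with a ≠ b let ε_{a,b} : Ω → ℝ be a square-integrable random variable with E[ε_{a,b}] = 0 and Var[ε_{a,b}] = σ², and assume that for any two distinct ordered pairs (a,b) ≠ (c,d) (with a ≠ b, c ≠ d) the covariance Cov[ε_{a,b}, ε_{c,d}] = 0. Define ρ_{a,b}(ω) = u†(a) − u†(b) + ε_{a,b}(ω) and U(a)(ω) = (1/N)·Σ_{b ≠ a} ρ_{a,b}(ω). Then for all i ≠ j, Var[U(i) − U(j)] = 2·(N−1)·σ²/N². -/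

import Mathlib

open Finset MeasureTheory ProbabilityTheory

lemma aux_integrable_mul {Ω : Type*} [MeasurableSpace Ω] {μ : Measure Ω}
    {f g : Ω → ℝ} (hf : MemLp f 2 μ) (hg : MemLp g 2 μ) :
    Integrable (fun ω => f ω * g ω) μ := by
  have h : MemLp (g • f) 1 μ := hf.smul hg (hpqr := ⟨by rw [inv_one]; exact ENNReal.inv_two_add_inv_two⟩)
  rw [memLp_one_iff_integrable] at h
  exact (by simpa [Pi.smul_apply, smul_eq_mul, mul_comm] using h : Integrable (f * g) μ)

lemma aux_variance_const_add {Ω : Type*} [MeasurableSpace Ω] {μ : Measure Ω}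
    [IsProbabilityMeasure μ] (c : ℝ) {Y : Ω → ℝ} (hY : Integrable Y μ) :
    variance (fun ω => c + Y ω) μ = variance Y μ := by
  have hint : μ[fun ω => c + Y ω] = c + μ[Y] := by
    rw [integral_add (integrable_const c) hY]
    simp
  rw [ProbabilityTheory.variance, ProbabilityTheory.variance,
    ProbabilityTheory.evariance, ProbabilityTheory.evariance]
  congr 1
  refine lintegral_congr fun ω => ?_
  rw [hint]
  ring_nf

lemma aux_variance_sum {Ω : Type*} [MeasurableSpace Ω] (μ : Measure Ω)
    [IsProbabilityMeasure μ] {ι : Type*} (s : Finset ι) (X : ι → Ω → ℝ)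
    (hX : ∀ i ∈ s, MemLp (X i) 2 μ)
    (hcov : ∀ i ∈ s, ∀ j ∈ s, i ≠ j →
      ∫ ω, X i ω * X j ω ∂μ = (∫ ω, X i ω ∂μ) * (∫ ω, X j ω ∂μ)) :
    variance (fun ω => ∑ i ∈ s, X i ω) μ = ∑ i ∈ s, variance (X i) μ := by
  have hsum : MemLp (fun ω => ∑ i ∈ s, X i ω) 2 μ := by
    have heq : (fun ω => ∑ i ∈ s, X i ω) = ∑ i ∈ s, X i := by
      funext ω; simp
    rw [heq]
    exact memLp_finset_sum' s hX
  have hint : ∀ i ∈ s, ∀ j ∈ s, Integrable (fun ω => X i ω * X j ω) μ :=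
    fun i hi j hj => aux_integrable_mul (hX i hi) (hX j hj)
  rw [variance_eq_sub hsum]
  have hsq : (μ[(fun ω => ∑ i ∈ s, X i ω) ^ 2]) =
      ∑ i ∈ s, ∑ j ∈ s, ∫ ω, X i ω * X j ω ∂μ := by
    calc (μ[(fun ω => ∑ i ∈ s, X i ω) ^ 2])
        = ∫ ω, ∑ i ∈ s, ∑ j ∈ s, X i ω * X j ω ∂μ := by
          refine integral_congr_ae (Filter.Eventually.of_forall fun ω => ?_)
          simp [sq, Finset.sum_mul_sum]
      _ = ∑ i ∈ s, ∫ ω, ∑ j ∈ s, X i ω * X j ω ∂μ := by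
          refine integral_finset_sum s fun i hi => ?_
          exact integrable_finset_sum s fun j hj => hint i hi j hj
      _ = ∑ i ∈ s, ∑ j ∈ s, ∫ ω, X i ω * X j ω ∂μ := by
          refine Finset.sum_congr rfl fun i hi => ?_
          exact integral_finset_sum s fun j hj => hint i hi j hj
  have hmean : (μ[fun ω => ∑ i ∈ s, X i ω]) = ∑ i ∈ s, ∫ ω, X i ω ∂μ :=
    integral_finset_sum s fun i hi => (hX i hi).integrable one_le_two
  rw [hsq, hmean]
  have key : ∑ i ∈ s, ∑ j ∈ s, ∫ ω, X i ω * X j ω ∂μ -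
      (∑ i ∈ s, ∫ ω, X i ω ∂μ) ^ 2 =
      ∑ i ∈ s, ((∫ ω, X i ω * X i ω ∂μ) - (∫ ω, X i ω ∂μ) ^ 2) := by
    rw [sq, Finset.sum_mul_sum, ← Finset.sum_sub_distrib]
    refine Finset.sum_congr rfl fun i hi => ?_
    rw [← Finset.sum_sub_distrib]
    rw [Finset.sum_eq_single_of_mem i hi]
    · ring
    · intro j hj hne
      rw [hcov i hi j hj (Ne.symm hne)]
      ring
  rw [key]
  refine Finset.sum_congr rfl fun i hi => ?_
  rw [variance_eq_sub (hX i hi)]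
  congr 1
  · congr 1
    funext ω
    simp [sq]

/-- With noise terms of equal variance `σ²`, uncorrelated across distinct
ordered pairs, the variance of the potential-method preference estimator is
`2(N-1)σ²/N²`. -/
theorem potential_method_preference_variance
    {Ω : Type*} [MeasurableSpace Ω] (μ : Measure Ω) [IsProbabilityMeasure μ]
    (N : ℕ) (hN : 2 ≤ N)
    (udag : Fin N → ℝ) (hu : ∑ k, udag k = 0)
    (σ : ℝ) (hσ : 0 ≤ σ)
    (ε : Fin N → Fin N → Ω → ℝ)
    (hL2 : ∀ a b, a ≠ b → MemLp (ε a b) 2 μ)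
    (hmean : ∀ a b, a ≠ b → ∫ ω, ε a b ω ∂μ = 0)
    (hvar : ∀ a b, a ≠ b → variance (ε a b) μ = σ ^ 2)
    (hcov : ∀ a b c d, a ≠ b → c ≠ d → (a, b) ≠ (c, d) →
      (∫ ω, ε a b ω * ε c d ω ∂μ) -
        (∫ ω, ε a b ω ∂μ) * (∫ ω, ε c d ω ∂μ) = 0)
    (ρ : Fin N → Fin N → Ω → ℝ)
    (hρ : ∀ a b, a ≠ b → ∀ ω, ρ a b ω = udag a - udag b + ε a b ω)
    (U : Fin N → Ω → ℝ)
    (hU : ∀ a ω, U a ω = (1 / (N : ℝ)) * ∑ b ∈ univ \ {a}, ρ a b ω) :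
    ∀ i j : Fin N, i ≠ j →
      variance (fun ω => U i ω - U j ω) μ =
        2 * ((N : ℝ) - 1) * σ ^ 2 / (N : ℝ) ^ 2 := by
  intro i j hij
  -- index set and summands
  set s : Finset (Fin N ⊕ Fin N) := (univ \ {i}).disjSum (univ \ {j}) with hs
  set X : Fin N ⊕ Fin N → Ω → ℝ :=
    fun p => Sum.elim (fun b ω => ε i b ω) (fun b ω => -(ε j b ω)) p with hXdef
  have hmemi : ∀ b : Fin N, b ∈ univ \ {i} → i ≠ b := by
    intro b hb
    simp only [mem_sdiff, mem_singleton] at hb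
    exact fun h => hb.2 h.symm
  have hmemj : ∀ b : Fin N, b ∈ univ \ {j} → j ≠ b := by
    intro b hb
    simp only [mem_sdiff, mem_singleton] at hb
    exact fun h => hb.2 h.symm
  -- L2 for each X p
  have hXL2 : ∀ p ∈ s, MemLp (X p) 2 μ := by
    intro p hp
    rcases p with b | b
    · simp only [hs, Finset.inl_mem_disjSum] at hp
      exact hL2 i b (hmemi b hp)
    · simp only [hs, Finset.inr_mem_disjSum] at hp
      have := (hL2 j b (hmemj b hp)).neg
      exact this
  -- mean zero for each X p
  have hXmean : ∀ p ∈ s, ∫ ω, X p ω ∂μ = 0 := by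
    intro p hp
    rcases p with b | b
    · simp only [hs, Finset.inl_mem_disjSum] at hp
      simpa [hXdef] using hmean i b (hmemi b hp)
    · simp only [hs, Finset.inr_mem_disjSum] at hp
      have := hmean j b (hmemj b hp)
      simp only [hXdef, Sum.elim_inr]
      rw [integral_neg, this, neg_zero]
  -- covariance zero
  have hXcov : ∀ p ∈ s, ∀ q ∈ s, p ≠ q →
      ∫ ω, X p ω * X q ω ∂μ = (∫ ω, X p ω ∂μ) * (∫ ω, X q ω ∂μ) := by
    intro p hp q hq hpq
    rw [hXmean p hp, hXmean q hq, mul_zero]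
    have base : ∀ (a b c d : Fin N), a ≠ b → c ≠ d → (a, b) ≠ (c, d) →
        ∫ ω, ε a b ω * ε c d ω ∂μ = 0 := by
      intro a b c d hab hcd hne
      have := hcov a b c d hab hcd hne
      rw [hmean a b hab, hmean c d hcd] at this
      linarith
    rcases p with b | b <;> rcases q with b' | b'
    · simp only [hs, Finset.inl_mem_disjSum] at hp hq
      have hbb' : b ≠ b' := fun h => hpq (by rw [h])
      simp only [hXdef, Sum.elim_inl]
      exact base i b i b' (hmemi b hp) (hmemi b' hq) (by simp [hbb'])
    · simp only [hs, Finset.inl_mem_disjSum, Finset.inr_mem_disjSum] at hp hq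
      simp only [hXdef, Sum.elim_inl, Sum.elim_inr]
      have : ∫ ω, ε i b ω * -(ε j b' ω) ∂μ = -∫ ω, ε i b ω * ε j b' ω ∂μ := by
        rw [← integral_neg]; congr 1; funext ω; ring
      rw [this, base i b j b' (hmemi b hp) (hmemj b' hq) (by simp [hij]), neg_zero]
    · simp only [hs, Finset.inl_mem_disjSum, Finset.inr_mem_disjSum] at hp hq
      simp only [hXdef, Sum.elim_inl, Sum.elim_inr]
      have : ∫ ω, -(ε j b ω) * ε i b' ω ∂μ = -∫ ω, ε j b ω * ε i b' ω ∂μ := by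
        rw [← integral_neg]; congr 1; funext ω; ring
      rw [this, base j b i b' (hmemj b hp) (hmemi b' hq) (by simp [hij.symm]), neg_zero]
    · simp only [hs, Finset.inr_mem_disjSum] at hp hq
      have hbb' : b ≠ b' := fun h => hpq (by rw [h])
      simp only [hXdef, Sum.elim_inr]
      have : ∫ ω, -(ε j b ω) * -(ε j b' ω) ∂μ = ∫ ω, ε j b ω * ε j b' ω ∂μ := by
        congr 1; funext ω; ring
      rw [this]
      exact base j b j b' (hmemj b hp) (hmemj b' hq) (by simp [hbb'])
  -- variance of each X p is σ²
  have hXvar : ∀ p ∈ s, variance (X p) μ = σ ^ 2 := by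
    intro p hp
    rcases p with b | b
    · simp only [hs, Finset.inl_mem_disjSum] at hp
      simpa [hXdef] using hvar i b (hmemi b hp)
    · simp only [hs, Finset.inr_mem_disjSum] at hp
      have h1 : variance (fun ω => (-1 : ℝ) * ε j b ω) μ
          = (-1 : ℝ) ^ 2 * variance (ε j b) μ := variance_const_mul (-1) (ε j b) μ
      have : X (Sum.inr b) = fun ω => (-1 : ℝ) * ε j b ω := by
        funext ω; simp [hXdef]
      rw [this, h1, hvar j b (hmemj b hp)]
      ring
  -- rewrite U i - U j
  set C : ℝ := (∑ b ∈ univ \ {i}, (udag i - udag b)) -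
      (∑ b ∈ univ \ {j}, (udag j - udag b)) with hC
  have hdecomp : ∀ ω, U i ω - U j ω = (1 / (N : ℝ)) * (C + ∑ p ∈ s, X p ω) := by
    intro ω
    rw [hU i ω, hU j ω, ← mul_sub]
    congr 1
    have h1 : ∑ b ∈ univ \ {i}, ρ i b ω
        = ∑ b ∈ univ \ {i}, (udag i - udag b + ε i b ω) :=
      Finset.sum_congr rfl fun b hb => hρ i b (hmemi b hb) ω
    have h2 : ∑ b ∈ univ \ {j}, ρ j b ω
        = ∑ b ∈ univ \ {j}, (udag j - udag b + ε j b ω) :=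
      Finset.sum_congr rfl fun b hb => hρ j b (hmemj b hb) ω
    rw [h1, h2, hs, Finset.sum_disjSum]
    simp only [hXdef, Sum.elim_inl, Sum.elim_inr, Finset.sum_add_distrib, hC,
      Finset.sum_neg_distrib]
    ring
  have hsumint : Integrable (fun ω => ∑ p ∈ s, X p ω) μ :=
    integrable_finset_sum s fun p hp => (hXL2 p hp).integrable one_le_two
  have hNpos : (0 : ℝ) < N := by positivity
  calc variance (fun ω => U i ω - U j ω) μ
      = variance (fun ω => (1 / (N : ℝ)) * (C + ∑ p ∈ s, X p ω)) μ := by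
        congr 1; funext ω; exact hdecomp ω
    _ = (1 / (N : ℝ)) ^ 2 * variance (fun ω => C + ∑ p ∈ s, X p ω) μ :=
        variance_const_mul (1 / (N : ℝ)) _ μ
    _ = (1 / (N : ℝ)) ^ 2 * variance (fun ω => ∑ p ∈ s, X p ω) μ := by
        rw [aux_variance_const_add C hsumint]
    _ = (1 / (N : ℝ)) ^ 2 * ∑ p ∈ s, variance (X p) μ := by
        rw [aux_variance_sum μ s X hXL2 hXcov]
    _ = (1 / (N : ℝ)) ^ 2 * ((s.card : ℝ) * σ ^ 2) := by
        rw [Finset.sum_congr rfl hXvar, Finset.sum_const, nsmul_eq_mul]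
    _ = 2 * ((N : ℝ) - 1) * σ ^ 2 / (N : ℝ) ^ 2 := by
        have hcard : s.card = (N - 1) + (N - 1) := by
          rw [hs, Finset.card_disjSum]
          congr 1 <;>
          · rw [Finset.card_sdiff_of_subset (by simp)]
            simp
        rw [hcard]
        have h1N : 1 ≤ N := le_trans (by norm_num) hN
        push_cast [Nat.cast_sub h1N]
        rw [eq_div_iff (pow_ne_zero 2 (ne_of_gt hNpos))]
        field_simp
        ring
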